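/- Let X be a Hausdorff topological space, let γ : [0,1] → X be an injective path, and let A, B, C be pairwise distinct points of range γ. If B is between A and C within range γ, then A is not between B and C within range γ, and C is not between A and B within range γ. (Paper's Theorem 1.6: if one point is between two others within a given fundamental line, then neither of the others is between the other two, within that line.) -/

import Mathlib

/-- `B` is between `A` and `C` within `S` (the paper's Interpretation 1.2): there are
injective paths from `A` to `B` and from `B` to `C`, each with range contained in `S`,
whose ranges intersect exactly in `{B}`. -/
def IsBetweenWithin {X : Type*} [TopologicalSpace X] (S : Set X) (A B C : X) : Prop :=
  ∃ δ₁ δ₂ : unitInterval → X,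
    Continuous δ₁ ∧ Function.Injective δ₁ ∧
    Continuous δ₂ ∧ Function.Injective δ₂ ∧
    δ₁ 0 = A ∧ δ₁ 1 = B ∧ δ₂ 0 = B ∧ δ₂ 1 = C ∧
    Set.range δ₁ ⊆ S ∧ Set.range δ₂ ⊆ S ∧
    Set.range δ₁ ∩ Set.range δ₂ = {B}

/-- Paper's Theorem 1.6: if one point is between two others within a given fundamental
line, then neither of the others is between the other two, within that line. -/

noncomputable instance : ConditionallyCompleteLinearOrder unitInterval :=
  haveI : Inhabited unitInterval := ⟨0⟩
  ordConnectedSubsetConditionallyCompleteLinearOrder _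

instance : OrderTopology unitInterval := orderTopology_of_ordConnected (t := unitInterval)

lemma range_eq_uIcc (f : unitInterval → unitInterval) (hc : Continuous f)
    (hi : Function.Injective f) : Set.range f = Set.uIcc (f 0) (f 1) := by
  apply Set.Subset.antisymm
  · rintro x ⟨t, rfl⟩
    rcases hc.strictMono_of_inj_boundedOrder' hi with hm | hm
    · have h0 : f 0 ≤ f t := hm.monotone bot_le
      have h1 : f t ≤ f 1 := hm.monotone le_top
      exact Set.mem_uIcc.2 (Or.inl ⟨h0, h1⟩)
    · have h0 : f t ≤ f 0 := hm.antitone bot_le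
      have h1 : f 1 ≤ f t := hm.antitone le_top
      exact Set.mem_uIcc.2 (Or.inr ⟨h1, h0⟩)
  · intro x hx
    obtain ⟨t, _, ht⟩ := intermediate_value_uIcc (f := f) (a := 0) (b := 1) hc.continuousOn hx
    exact ⟨t, ht⟩

lemma key {X : Type*} [TopologicalSpace X] [T2Space X]
    (γ : unitInterval → X) (hc : Continuous γ) (hi : Function.Injective γ)
    (a b c : unitInterval) (h : IsBetweenWithin (Set.range γ) (γ a) (γ b) (γ c)) :
    Set.uIcc a b ∩ Set.uIcc b c = {b} := by
  obtain ⟨δ₁, δ₂, hc1, hi1, hc2, hi2, h10, h11, h20, h21, hr1, hr2, hint⟩ := h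
  have emb : Topology.IsEmbedding γ := (hc.isClosedEmbedding hi).toIsEmbedding
  let e : unitInterval ≃ₜ Set.range γ := emb.toHomeomorph
  have lift : ∀ (δ : unitInterval → X), Continuous δ → Function.Injective δ →
      Set.range δ ⊆ Set.range γ →
      ∃ f : unitInterval → unitInterval, Continuous f ∧ Function.Injective f ∧
        ∀ t, γ (f t) = δ t := by
    intro δ hcδ hiδ hrδ
    refine ⟨fun t => e.symm ⟨δ t, hrδ ⟨t, rfl⟩⟩, ?_, ?_, ?_⟩
    · exact e.symm.continuous.comp (Continuous.subtype_mk hcδ _)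
    · intro s t hst
      apply hiδ
      have := congrArg e hst
      simpa [e] using congrArg Subtype.val this
    · intro t
      exact congrArg Subtype.val (e.apply_symm_apply ⟨δ t, hrδ ⟨t, rfl⟩⟩)
  obtain ⟨f₁, hcf1, hif1, hγf1⟩ := lift δ₁ hc1 hi1 hr1
  obtain ⟨f₂, hcf2, hif2, hγf2⟩ := lift δ₂ hc2 hi2 hr2
  have hf10 : f₁ 0 = a := hi (by rw [hγf1, h10])
  have hf11 : f₁ 1 = b := hi (by rw [hγf1, h11])
  have hf20 : f₂ 0 = b := hi (by rw [hγf2, h20])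
  have hf21 : f₂ 1 = c := hi (by rw [hγf2, h21])
  have hr1' : Set.range δ₁ = γ '' Set.uIcc a b := by
    rw [← hf10, ← hf11, ← range_eq_uIcc f₁ hcf1 hif1]
    ext x; simp only [Set.mem_range, Set.mem_image]
    constructor
    · rintro ⟨t, rfl⟩; exact ⟨f₁ t, ⟨t, rfl⟩, hγf1 t⟩
    · rintro ⟨u, ⟨t, rfl⟩, rfl⟩; exact ⟨t, (hγf1 t).symm⟩
  have hr2' : Set.range δ₂ = γ '' Set.uIcc b c := by
    rw [← hf20, ← hf21, ← range_eq_uIcc f₂ hcf2 hif2]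
    ext x; simp only [Set.mem_range, Set.mem_image]
    constructor
    · rintro ⟨t, rfl⟩; exact ⟨f₂ t, ⟨t, rfl⟩, hγf2 t⟩
    · rintro ⟨u, ⟨t, rfl⟩, rfl⟩; exact ⟨t, (hγf2 t).symm⟩
  rw [hr1', hr2', ← Set.image_inter hi] at hint
  have : γ '' (Set.uIcc a b ∩ Set.uIcc b c) = γ '' {b} := by rw [hint, Set.image_singleton]
  exact Set.image_injective.2 hi this

theorem isBetween_unique {X : Type*} [TopologicalSpace X] [T2Space X]
    (γ : unitInterval → X) (hc : Continuous γ) (hi : Function.Injective γ)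
    (A B C : X) (hA : A ∈ Set.range γ) (hB : B ∈ Set.range γ) (hC : C ∈ Set.range γ)
    (hAB : A ≠ B) (hAC : A ≠ C) (hBC : B ≠ C)
    (h : IsBetweenWithin (Set.range γ) A B C) :
    ¬ IsBetweenWithin (Set.range γ) B A C ∧
    ¬ IsBetweenWithin (Set.range γ) A C B := by
  obtain ⟨a, rfl⟩ := hA
  obtain ⟨b, rfl⟩ := hB
  obtain ⟨c, rfl⟩ := hC
  have hab : a ≠ b := fun e => hAB (congrArg γ e)
  have hbc : b ≠ c := fun e => hBC (congrArg γ e)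
  have H1 := key γ hc hi a b c h
  have hb_mem : b ∈ Set.uIcc a c := by
    by_contra hb
    rw [Set.mem_uIcc] at hb
    push_neg at hb
    obtain ⟨hb1, hb2⟩ := hb
    rcases le_total a b with hba | hba
    · have hcb : c < b := hb1 hba
      have hab' : a < b := hb2 hcb.le
      have : max a c ∈ Set.uIcc a b ∩ Set.uIcc b c := by
        constructor
        · rw [Set.uIcc_of_le hba]
          exact ⟨le_max_left a c, max_le hba hcb.le⟩
        · rw [Set.uIcc_of_ge hcb.le]
          exact ⟨le_max_right a c, max_le hba hcb.le⟩
      rw [H1] at this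
      exact absurd this.symm (ne_of_lt (max_lt hab' hcb)).symm
    · have hbc' : b < c := by
        by_contra hbc2
        exact absurd hba (not_le_of_gt (hb2 (le_of_not_gt hbc2)))
      have hba' : b < a := lt_of_le_of_ne hba (Ne.symm hab)
      have : min a c ∈ Set.uIcc a b ∩ Set.uIcc b c := by
        constructor
        · rw [Set.uIcc_of_ge hba]
          exact ⟨le_min hba hbc'.le, min_le_left a c⟩
        · rw [Set.uIcc_of_le hbc'.le]
          exact ⟨le_min hba hbc'.le, min_le_right a c⟩
      rw [H1] at this
      exact absurd this (ne_of_gt (lt_min hba' hbc'))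
  constructor
  · intro h'
    have H2 := key γ hc hi b a c h'
    have : b ∈ Set.uIcc b a ∩ Set.uIcc a c := ⟨Set.left_mem_uIcc, hb_mem⟩
    rw [H2] at this
    exact hab this.symm
  · intro h''
    have H3 := key γ hc hi a c b h''
    have : b ∈ Set.uIcc a c ∩ Set.uIcc c b := ⟨hb_mem, Set.right_mem_uIcc⟩
    rw [H3] at this
    exact hbc this
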